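/- Suppose G contains K_{1,d} as an induced subgraph and F admits a weak oddomorphism to G. Then F contains K_{1,d} as an induced subgraph. -/

import Mathlib

open SimpleGraph

variable {α β : Type}

/-- A vertex `a` of `F` is *odd* with respect to a homomorphism `ψ : F → G` if
`|N_F(a) ∩ ψ⁻¹(v)|` is odd for every `v` adjacent to `ψ a` in `G`. -/
def IsOddVertex (F : SimpleGraph α) (G : SimpleGraph β) (ψ : F →g G) (a : α) : Prop :=
  ∀ v : β, G.Adj (ψ a) v → Odd (F.neighborSet a ∩ (⇑ψ) ⁻¹' {v}).ncard

/-- A vertex `a` of `F` is *even* with respect to a homomorphism `ψ : F → G` if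
`|N_F(a) ∩ ψ⁻¹(v)|` is even for every `v` adjacent to `ψ a` in `G`. -/
def IsEvenVertex (F : SimpleGraph α) (G : SimpleGraph β) (ψ : F →g G) (a : α) : Prop :=
  ∀ v : β, G.Adj (ψ a) v → Even (F.neighborSet a ∩ (⇑ψ) ⁻¹' {v}).ncard

/-- An *oddomorphism* from `F` to `G` is a homomorphism `ψ` such that every vertex of `F`
is odd or even w.r.t. `ψ`, and every fibre `ψ⁻¹(v)` contains an odd number of odd
vertices. -/
def IsOddomorphism (F : SimpleGraph α) (G : SimpleGraph β) (ψ : F →g G) : Prop :=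
  (∀ a : α, IsOddVertex F G ψ a ∨ IsEvenVertex F G ψ a) ∧
  (∀ v : β, Odd {a : α | ψ a = v ∧ IsOddVertex F G ψ a}.ncard)

/-- A homomorphism `ψ : F → G` is a *weak oddomorphism* if its restriction to (the vertex
set of) some subgraph `F'` of `F` is an oddomorphism from `F'` to `G`. -/
def IsWeakOddomorphism (F : SimpleGraph α) (G : SimpleGraph β) (ψ : F →g G) : Prop :=
  ∃ F' : F.Subgraph, IsOddomorphism F'.coe G (ψ.comp F'.hom)

/-- If `G` contains the star `K_{1,d}` as an induced subgraph and `F`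
admits a weak oddomorphism to `G`, then `F` contains `K_{1,d}` as an induced subgraph. -/
theorem weakOddomorphism_inducedStar [Fintype α] [Fintype β]
    (F : SimpleGraph α) (G : SimpleGraph β) (d : ℕ)
    (hG : Nonempty (completeBipartiteGraph (Fin 1) (Fin d) ↪g G))
    (h : ∃ ψ : F →g G, IsWeakOddomorphism F G ψ) :
    Nonempty (completeBipartiteGraph (Fin 1) (Fin d) ↪g F) := by
  obtain ⟨g⟩ := hG
  obtain ⟨ψ, F', hvert, hfib⟩ := h
  set φ := ψ.comp F'.hom with hφ
  set c := g (Sum.inl 0) with hc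
  set v : Fin d → β := fun i => g (Sum.inr i) with hv
  have hcv : ∀ i, G.Adj c (v i) := fun i => g.map_rel_iff.2 (by simp)
  have hvv : ∀ i j, i ≠ j → ¬ G.Adj (v i) (v j) := by
    intro i j hij hadj
    have := g.map_rel_iff.1 hadj
    simp at this
  obtain ⟨a, ha_c, ha_odd⟩ : {a | φ a = c ∧ IsOddVertex F'.coe G φ a}.Nonempty :=
    Set.nonempty_of_ncard_ne_zero (hfib c).pos.ne'
  have hbex : ∀ i : Fin d, ((F'.coe.neighborSet a ∩ (⇑φ) ⁻¹' {v i})).Nonempty := by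
    intro i
    exact Set.nonempty_of_ncard_ne_zero (ha_odd (v i) (by rw [ha_c]; exact hcv i)).pos.ne'
  choose b hb using hbex
  have hadj : ∀ i, F'.coe.Adj a (b i) := fun i => (hb i).1
  have hφb : ∀ i, ψ ↑(b i) = v i := fun i => (hb i).2
  have hFa : ∀ i, F.Adj ↑a ↑(b i) := fun i => F'.adj_sub (hadj i)
  have hFbb : ∀ i j, i ≠ j → ¬ F.Adj ↑(b i) ↑(b j) := by
    intro i j hij hadj'
    have h1 : G.Adj (ψ ↑(b i)) (ψ ↑(b j)) := ψ.map_adj hadj'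
    rw [hφb i, hφb j] at h1
    exact hvv i j hij h1
  have hbinj : Function.Injective fun i => (b i : α) := by
    intro i j hbij
    have : v i = v j := by rw [← hφb i, ← hφb j]; exact congrArg ψ hbij
    have := g.injective (hv ▸ this)
    exact Sum.inr.inj this
  refine ⟨⟨⟨Sum.elim (fun _ => (a : α)) (fun i => (b i : α)), ?_⟩, ?_⟩⟩
  · intro x y hxy
    cases x with
    | inl i => cases y with
      | inl j => simp [Subsingleton.elim i j]
      | inr j => exact absurd hxy (hFa j).ne
    | inr i => cases y with
      | inl j => exact absurd hxy.symm (hFa i).ne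
      | inr j => exact congrArg Sum.inr (hbinj hxy)
  · intro x y
    cases x with
    | inl i => cases y with
      | inl j => exact ⟨fun h => absurd h F.irrefl, fun h => by simp at h⟩
      | inr j => exact ⟨fun _ => by simp, fun _ => hFa j⟩
    | inr i => cases y with
      | inl j => exact ⟨fun _ => by simp, fun _ => (hFa i).symm⟩
      | inr j =>
        by_cases hij : i = j
        · subst hij; simp
        · exact ⟨fun h => absurd h (hFbb i j hij), fun h => by simp at h⟩
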